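/- Let M be a finite irreducible projection monoid on a finite-dimensional vector space V. If K is a kernel of M and L is an image of M with K not contained in L, then the projection with kernel K and image L lies in M (i.e., M is complete). -/
import Mathlib

open Module LinearMap Matrix
set_option linter.unusedSectionVars false

section Aux
variable {F V : Type*} [Field F] [AddCommGroup V] [Module F V]

/-- auxiliary: determinant is zero when all columns lie in a small subspace. -/
lemma aux_det_eq_zero_of_cols_mem {ι : Type*} [Fintype ι] [DecidableEq ι]
    (B : Matrix ι ι F) (S : Submodule F (ι → F))
    (hcols : ∀ j, (fun i => B i j) ∈ S) (hS : Module.finrank F S < Fintype.card ι) :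
    B.det = 0 := by
  by_contra hdet
  have hind : LinearIndependent F (fun j : ι => (fun i => B i j)) := by
    by_contra hni
    obtain ⟨g, hsum, i0, hg⟩ := Fintype.not_linearIndependent_iff.mp hni
    have hmv : B.mulVec g = 0 := by
      funext i
      have h := congrFun hsum i
      simp only [Finset.sum_apply, Pi.smul_apply, smul_eq_mul, Pi.zero_apply] at h
      simpa [Matrix.mulVec, dotProduct, mul_comm] using h
    have hg0 : g ≠ 0 := fun h0 => hg (by rw [h0]; rfl)
    exact hdet (Matrix.exists_mulVec_eq_zero_iff.mp ⟨g, hg0, hmv⟩)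
  have h1 : Submodule.span F (Set.range fun j : ι => (fun i => B i j)) ≤ S :=
    Submodule.span_le.mpr (by rintro _ ⟨j, rfl⟩; exact hcols j)
  have h2 := finrank_span_eq_card hind
  have h3 := Submodule.finrank_mono h1
  omega

lemma aux_adjugate_eq_zero_of_rows_mem {ι : Type*} [Fintype ι] [DecidableEq ι]
    (A : Matrix ι ι F) (S0 : Submodule F (ι → F))
    (hrows : ∀ i, A i ∈ S0) (hS0 : Module.finrank F S0 + 2 ≤ Fintype.card ι) :
    adjugate A = 0 := by
  ext i j
  rw [Matrix.adjugate_apply, Matrix.zero_apply, ← Matrix.det_transpose]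
  have hone : (Pi.single i (1:F) : ι → F) ≠ 0 := by
    intro h0
    have := congrFun h0 i
    simp at this
  apply aux_det_eq_zero_of_cols_mem _ (S0 ⊔ Submodule.span F {(Pi.single i (1:F) : ι → F)})
  · intro k
    have hcol : (fun l => (A.updateRow j (Pi.single i 1))ᵀ l k)
        = (A.updateRow j (Pi.single i 1)) k := rfl
    rw [hcol]
    by_cases hk : k = j
    · subst hk
      rw [Matrix.updateRow_self]
      exact Submodule.mem_sup_right (Submodule.mem_span_singleton_self _)
    · rw [Matrix.updateRow_ne hk]
      exact Submodule.mem_sup_left (hrows k)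
  · have h1 : Module.finrank F (Submodule.span F {(Pi.single i (1:F) : ι → F)}) = 1 :=
      finrank_span_singleton hone
    have h2 := Submodule.finrank_sup_add_finrank_inf_eq S0
      (Submodule.span F {(Pi.single i (1:F) : ι → F)})
    omega

variable [FiniteDimensional F V]

/-- The adjugate of an endomorphism, via a basis. -/
noncomputable def adjE {ι : Type*} [Fintype ι] [DecidableEq ι] (b : Basis ι F V)
    (f : Module.End F V) : Module.End F V :=
  Matrix.toLin b b (Matrix.adjugate (LinearMap.toMatrix b b f))

lemma adjE_one {ι : Type*} [Fintype ι] [DecidableEq ι] (b : Basis ι F V) :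
    adjE b (1 : Module.End F V) = 1 := by
  rw [adjE, LinearMap.toMatrix_one, Matrix.adjugate_one, Matrix.toLin_one]
  rfl

lemma adjE_mul {ι : Type*} [Fintype ι] [DecidableEq ι] (b : Basis ι F V)
    (f g : Module.End F V) : adjE b (f * g) = adjE b g * adjE b f := by
  rw [adjE, LinearMap.toMatrix_mul, Matrix.adjugate_mul_distrib, adjE, adjE,
    Matrix.toLin_mul b b b]
  rfl

lemma adjE_eq_zero {ι : Type*} [Fintype ι] [DecidableEq ι] (b : Basis ι F V)
    (f : Module.End F V)
    (hf : Module.finrank F (LinearMap.range f) + 2 ≤ Module.finrank F V) :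
    adjE b f = 0 := by
  rw [adjE]
  have key : Matrix.adjugate (LinearMap.toMatrix b b f) = 0 := by
    have h := aux_adjugate_eq_zero_of_rows_mem (LinearMap.toMatrix b b f)ᵀ
      ((LinearMap.range f).map (b.equivFun : V →ₗ[F] (ι → F))) ?_ ?_
    · rw [← Matrix.transpose_transpose (Matrix.adjugate (LinearMap.toMatrix b b f)),
        Matrix.adjugate_transpose, h, Matrix.transpose_zero]
    · intro k
      have : (LinearMap.toMatrix b b f)ᵀ k = b.equivFun (f (b k)) := by
        funext l
        rw [Matrix.transpose_apply, LinearMap.toMatrix_apply, Basis.equivFun_apply]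
      rw [this]
      exact Submodule.mem_map_of_mem (LinearMap.mem_range_self f (b k))
    · rw [LinearEquiv.finrank_map_eq, Module.finrank_eq_card_basis b] at *
      exact hf
  rw [key]
  exact LinearEquiv.map_zero _

lemma adjE_indep_same {ι : Type*} [Fintype ι] [DecidableEq ι] (b c : Basis ι F V)
    (f : Module.End F V) : adjE b f = adjE c f := by
  classical
  set Q : Matrix ι ι F := LinearMap.toMatrix c b LinearMap.id with hQ
  set Q' : Matrix ι ι F := LinearMap.toMatrix b c LinearMap.id with hQ'
  have hQQ' : Q * Q' = 1 := by
    rw [hQ, hQ', ← LinearMap.toMatrix_comp b c b, LinearMap.id_comp, LinearMap.toMatrix_id]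
  have hQ'Q : Q' * Q = 1 := by
    rw [hQ, hQ', ← LinearMap.toMatrix_comp c b c, LinearMap.id_comp, LinearMap.toMatrix_id]
  have hdet : Q'.det * Q.det = 1 := by
    rw [← Matrix.det_mul, hQ'Q, Matrix.det_one]
  have hbc : LinearMap.toMatrix b b f = Q * LinearMap.toMatrix c c f * Q' := by
    rw [hQ, hQ', ← LinearMap.toMatrix_comp c c b LinearMap.id f,
      ← LinearMap.toMatrix_comp b c b (LinearMap.id.comp f) LinearMap.id,
      LinearMap.comp_id, LinearMap.id_comp]
  have hadjQ : Matrix.adjugate Q = Q.det • Q' := by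
    have := Matrix.mul_adjugate Q
    calc Matrix.adjugate Q = 1 * Matrix.adjugate Q := (one_mul _).symm
    _ = Q' * Q * Matrix.adjugate Q := by rw [hQ'Q]
    _ = Q' * (Q * Matrix.adjugate Q) := by rw [Matrix.mul_assoc]
    _ = Q' * (Q.det • 1) := by rw [this]
    _ = Q.det • Q' := by rw [Matrix.mul_smul, Matrix.mul_one]
  have hadjQ' : Matrix.adjugate Q' = Q'.det • Q := by
    have := Matrix.mul_adjugate Q'
    calc Matrix.adjugate Q' = 1 * Matrix.adjugate Q' := (one_mul _).symm
    _ = Q * Q' * Matrix.adjugate Q' := by rw [hQQ']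
    _ = Q * (Q' * Matrix.adjugate Q') := by rw [Matrix.mul_assoc]
    _ = Q * (Q'.det • 1) := by rw [this]
    _ = Q'.det • Q := by rw [Matrix.mul_smul, Matrix.mul_one]
  have hadj : Matrix.adjugate (LinearMap.toMatrix b b f)
      = Q * Matrix.adjugate (LinearMap.toMatrix c c f) * Q' := by
    rw [hbc, Matrix.adjugate_mul_distrib, Matrix.adjugate_mul_distrib, hadjQ, hadjQ']
    simp only [Matrix.smul_mul, Matrix.mul_smul, smul_smul, Matrix.mul_assoc]
    rw [mul_comm Q.det Q'.det, hdet, one_smul]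
  rw [adjE, adjE, hadj, Matrix.toLin_mul b c b, Matrix.toLin_mul c c b]
  have h1 : Matrix.toLin c b Q = LinearMap.id := by
    rw [hQ, Matrix.toLin_toMatrix]
  have h2 : Matrix.toLin b c Q' = LinearMap.id := by
    rw [hQ', Matrix.toLin_toMatrix]
  rw [h1, h2, LinearMap.id_comp, LinearMap.comp_id]

lemma adjE_indep {ι κ : Type*} [Fintype ι] [DecidableEq ι] [Fintype κ] [DecidableEq κ]
    (b : Basis ι F V) (c : Basis κ F V) (f : Module.End F V) :
    adjE b f = adjE c f := by
  classical
  have hcard : Fintype.card κ = Fintype.card ι := by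
    rw [← Module.finrank_eq_card_basis b, ← Module.finrank_eq_card_basis c]
  let e : κ ≃ ι := Fintype.equivOfCardEq hcard
  let c' : Basis ι F V := c.reindex e
  have key : ∀ g : Module.End F V,
      LinearMap.toMatrix c' c' g = (LinearMap.toMatrix c c g).submatrix e.symm e.symm := by
    intro g
    ext i j
    rw [LinearMap.toMatrix_apply, Matrix.submatrix_apply, LinearMap.toMatrix_apply,
      Module.Basis.reindex_apply, Basis.repr_reindex_apply]
  have h1 : adjE c' f = adjE c f := by
    rw [adjE, adjE, key f, Matrix.adjugate_submatrix_equiv_self]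
    have h2 : LinearMap.toMatrix c' c' (Matrix.toLin c c
        (Matrix.adjugate (LinearMap.toMatrix c c f)))
        = (Matrix.adjugate (LinearMap.toMatrix c c f)).submatrix e.symm e.symm := by
      rw [key, LinearMap.toMatrix_toLin]
    rw [← h2, Matrix.toLin_toMatrix]
  rw [← h1]
  exact adjE_indep_same b c' f

lemma range_fixed {p : Module.End F V} (hp : p * p = p) {x : V}
    (hx : x ∈ LinearMap.range p) : p x = x := by
  obtain ⟨y, rfl⟩ := hx
  calc p (p y) = (p * p) y := rfl
  _ = p y := by rw [hp]

lemma isCompl_ker_range {p : Module.End F V} (hp : p * p = p) :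
    IsCompl (LinearMap.ker p) (LinearMap.range p) := by
  constructor
  · rw [Submodule.disjoint_def]
    intro x hx1 hx2
    have := range_fixed hp hx2
    rw [LinearMap.mem_ker.mp hx1] at this
    exact this.symm
  · rw [codisjoint_iff, eq_top_iff]
    intro x _
    refine Submodule.mem_sup.mpr ⟨x - p x, ?_, p x, LinearMap.mem_range_self p x, by abel⟩
    rw [LinearMap.mem_ker, map_sub]
    have : p (p x) = (p * p) x := rfl
    rw [this, hp, sub_self]

lemma adjE_proj {ι : Type*} [Fintype ι] [DecidableEq ι] (b : Basis ι F V)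
    {p : Module.End F V} (hp : p * p = p)
    (hker : Module.finrank F (LinearMap.ker p) = 1) :
    adjE b p = 1 - p := by
  classical
  have hcompl := isCompl_ker_range hp
  set bK := Module.finBasis F (LinearMap.ker p)
  set bR := Module.finBasis F (LinearMap.range p)
  set c : Basis (Fin (Module.finrank F (LinearMap.ker p))
      ⊕ Fin (Module.finrank F (LinearMap.range p))) F V :=
    (bK.prod bR).map (Submodule.prodEquivOfIsCompl _ _ hcompl) with hc
  have hcl : ∀ i, c (Sum.inl i) = (bK i : V) := by
    intro i
    rw [hc, Basis.map_apply]
    have h1 : (bK.prod bR) (Sum.inl i) = (bK i, (0 : LinearMap.range p)) :=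
      Prod.ext (bK.prod_apply_inl_fst bR i) (bK.prod_apply_inl_snd bR i)
    rw [h1, Submodule.coe_prodEquivOfIsCompl']
    simp
  have hcr : ∀ i, c (Sum.inr i) = (bR i : V) := by
    intro i
    rw [hc, Basis.map_apply]
    have h1 : (bK.prod bR) (Sum.inr i) = ((0 : LinearMap.ker p), bR i) :=
      Prod.ext (bK.prod_apply_inr_fst bR i) (bK.prod_apply_inr_snd bR i)
    rw [h1, Submodule.coe_prodEquivOfIsCompl']
    simp
  set d : (Fin (Module.finrank F (LinearMap.ker p))
      ⊕ Fin (Module.finrank F (LinearMap.range p))) → F := Sum.elim (fun _ => 0) (fun _ => 1)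
    with hd
  have hdiag : LinearMap.toMatrix c c p = Matrix.diagonal d := by
    ext i j
    rw [LinearMap.toMatrix_apply]
    rcases j with j | j
    · have h0 : p (c (Sum.inl j)) = 0 := by
        rw [hcl]; exact LinearMap.mem_ker.mp (bK j).2
      rw [h0, map_zero]
      rcases eq_or_ne i (Sum.inl j) with h | h
      · rw [h, Matrix.diagonal_apply_eq]
        simp [hd]
      · rw [Matrix.diagonal_apply_ne _ h]
        simp
    · have h0 : p (c (Sum.inr j)) = c (Sum.inr j) := by
        rw [hcr]; exact range_fixed hp (bR j).2
      rw [h0, Basis.repr_self]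
      rcases eq_or_ne i (Sum.inr j) with h | h
      · rw [h, Matrix.diagonal_apply_eq]
        simp [hd]
      · rw [Matrix.diagonal_apply_ne _ h]
        rw [Finsupp.single_apply]
        simp [Ne.symm h]
  have hadj : Matrix.adjugate (LinearMap.toMatrix c c p)
      = 1 - LinearMap.toMatrix c c p := by
    rw [hdiag, Matrix.adjugate_diagonal]
    have hd' : (fun i => ∏ j ∈ Finset.univ.erase i, d j)
        = Sum.elim (fun _ : Fin (Module.finrank F (LinearMap.ker p)) => (1:F))
          (fun _ : Fin (Module.finrank F (LinearMap.range p)) => (0:F)) := by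
      funext i
      rcases i with i | i
      · refine Finset.prod_eq_one ?_
        intro j hj
        rcases j with j | j
        · exfalso
          have hji : j = i := by
            have h1 : (j : ℕ) < 1 := by rw [← hker]; exact j.isLt
            have h2 : (i : ℕ) < 1 := by rw [← hker]; exact i.isLt
            apply Fin.ext; omega
          exact (Finset.mem_erase.mp hj).1 (by rw [hji])
        · simp [hd]
      · have hmem : (Sum.inl (⟨0, by rw [hker]; norm_num⟩ :
            Fin (Module.finrank F (LinearMap.ker p)))) ∈ Finset.univ.erase (Sum.inr i) := by
          refine Finset.mem_erase.mpr ⟨by simp, Finset.mem_univ _⟩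
        refine Finset.prod_eq_zero hmem ?_
        simp [hd]
    rw [hd']
    ext i j
    rcases eq_or_ne i j with h | h
    · subst h
      rw [Matrix.diagonal_apply_eq, Matrix.sub_apply, Matrix.one_apply_eq,
        Matrix.diagonal_apply_eq]
      rcases i with i | i <;> simp [hd]
    · rw [Matrix.diagonal_apply_ne _ h, Matrix.sub_apply, Matrix.one_apply_ne h,
        Matrix.diagonal_apply_ne _ h, sub_zero]
  have := adjE_indep b c p
  rw [this, adjE, hadj, map_sub, Matrix.toLin_one, Matrix.toLin_toMatrix]
  rfl

lemma exists_pow_idem {G : Type*} [Monoid G] (s : G) {T : Set G} (hT : T.Finite)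
    (hpow : ∀ n : ℕ, s ^ n ∈ T) : ∃ N : ℕ, 1 ≤ N ∧ s ^ (2 * N) = s ^ N := by
  have main : ∀ i j : ℕ, i < j → s ^ i = s ^ j → ∃ N, 1 ≤ N ∧ s ^ (2*N) = s ^ N := by
    intro i j hij hs
    have key : ∀ k, i ≤ k → s ^ (k + (j - i)) = s ^ k := by
      intro k hk
      have h1 : k + (j - i) = j + (k - i) := by omega
      have h2 : i + (k - i) = k := by omega
      calc s ^ (k + (j-i)) = s ^ (j + (k-i)) := by rw [h1]
      _ = s ^ j * s ^ (k-i) := by rw [pow_add]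
      _ = s ^ i * s ^ (k-i) := by rw [hs]
      _ = s ^ (i + (k-i)) := by rw [pow_add]
      _ = s ^ k := by rw [h2]
    have key2 : ∀ c k, i ≤ k → s ^ (k + c * (j - i)) = s ^ k := by
      intro c
      induction c with
      | zero => intro k _; simp
      | succ c ih =>
        intro k hk
        have h3 : k + (c+1) * (j-i) = (k + (j-i)) + c * (j-i) := by ring
        rw [h3, ih _ (by omega), key k hk]
    have hd1 : 1 ≤ j - i := by omega
    have hpos : 0 < (i+1) * (j-i) := Nat.mul_pos (by omega) (by omega)
    have hile : i ≤ (i+1) * (j-i) := by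
      have h5 : (i+1) * 1 ≤ (i+1) * (j-i) := Nat.mul_le_mul_left _ hd1
      omega
    refine ⟨(i+1) * (j-i), by omega, ?_⟩
    have h4 : 2 * ((i+1)*(j-i)) = (i+1)*(j-i) + (i+1) * (j-i) := by ring
    rw [h4]
    exact key2 (i+1) _ hile
  haveI := hT.to_subtype
  obtain ⟨i, j, hne, heq⟩ :=
    Finite.exists_ne_map_eq_of_infinite (fun n : ℕ => (⟨s ^ n, hpow n⟩ : T))
  have heq' : s ^ i = s ^ j := congrArg Subtype.val heq
  rcases hne.lt_or_gt with h | h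
  · exact main i j h heq'
  · exact main j i h heq'.symm

end Aux

/-- A projection: an idempotent linear endomorphism of nullity 1. -/
def IsProj1 {F V : Type*} [Field F] [AddCommGroup V] [Module F V]
    (p : Module.End F V) : Prop :=
  p * p = p ∧ Module.finrank F (LinearMap.ker p) = 1

/-- A finite irreducible projection monoid `M` on a finite-dimensional
vector space is complete: if `K` is a kernel of `M` and `L` is an image of `M` with
`K ⊄ L`, then the projection with kernel `K` and image `L` lies in `M`. -/
theorem stmt_2 {F V : Type*} [Field F] [AddCommGroup V] [Module F V]
    [FiniteDimensional F V]
    (M : Submonoid (Module.End F V))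
    (hgen : ∃ P : Set (Module.End F V), (∀ p ∈ P, IsProj1 p) ∧ M = Submonoid.closure P)
    (hfin : (M : Set (Module.End F V)).Finite)
    (hirr : ∀ W : Submodule F V, (∀ m ∈ M, ∀ w ∈ W, m w ∈ W) → W = ⊥ ∨ W = ⊤)
    (K L : Submodule F V)
    (hK : ∃ p ∈ M, IsProj1 p ∧ LinearMap.ker p = K)
    (hL : ∃ p ∈ M, IsProj1 p ∧ LinearMap.range p = L)
    (hKL : ¬ K ≤ L) :
    ∃ r ∈ M, r * r = r ∧ LinearMap.ker r = K ∧ LinearMap.range r = L := by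
  classical
  obtain ⟨P, hP, hM⟩ := hgen
  obtain ⟨p, hpM, hpProj, hpker⟩ := hK
  obtain ⟨q, hqM, hqProj, hqrange⟩ := hL
  set b := Module.finBasis F V with hb
  have hKdim : Module.finrank F K = 1 := by rw [← hpker]; exact hpProj.2
  have hqker : Module.finrank F (LinearMap.ker q) = 1 := hqProj.2
  have hrnp := LinearMap.finrank_range_add_finrank_ker p
  have hrnq := LinearMap.finrank_range_add_finrank_ker q
  have hLdim : Module.finrank F L + 1 = Module.finrank F V := by
    rw [← hqrange, ← hqker]; exact hrnq
  -- a nonzero vector in ker q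
  have hkerqne : LinearMap.ker q ≠ ⊥ := by
    intro h0; rw [h0, finrank_bot] at hqker; omega
  obtain ⟨u, huq, hu0⟩ := (Submodule.ne_bot_iff _).mp hkerqne
  have hqu : q u = 0 := LinearMap.mem_ker.mp huq
  -- the span of the adjugate orbit of u
  set W : Submodule F V :=
    Submodule.span F ((fun m : Module.End F V => adjE b m u) '' (M : Set _)) with hW
  have hPM : ∀ p' ∈ P, p' ∈ M := fun p' hp' => by
    rw [hM]; exact Submonoid.subset_closure hp'
  have hgenW : ∀ m ∈ M, adjE b m u ∈ W := fun m hm => Submodule.subset_span ⟨m, hm, rfl⟩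
  have hWinv : ∀ g ∈ M, ∀ w ∈ W, g w ∈ W := by
    intro g hg
    rw [hM] at hg
    induction hg using Submonoid.closure_induction with
    | mem p' hp' =>
      intro w hw
      have hsub : W ≤ W.comap p' := by
        conv_lhs => rw [hW]
        apply Submodule.span_le.mpr
        rintro _ ⟨m, hm, rfl⟩
        simp only [SetLike.mem_coe, Submodule.mem_comap]
        have h0 : adjE b (m * p') = adjE b m - p' * adjE b m := by
          rw [adjE_mul, adjE_proj b (hP p' hp').1 (hP p' hp').2, sub_mul, one_mul]
        have h1 : p' (adjE b m u) = adjE b m u - adjE b (m * p') u := by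
          have h2 := congrArg (fun t : Module.End F V => t u) h0
          simp only [LinearMap.sub_apply, Module.End.mul_apply] at h2
          rw [h2]; abel
        rw [h1]
        exact sub_mem (hgenW m hm) (hgenW (m * p') (mul_mem hm (hPM p' hp')))
      exact hsub hw
    | one => intro w hw; simpa using hw
    | mul x y hx hy ihx ihy =>
      intro w hw
      have : (x * y) w = x (y w) := rfl
      rw [this]
      exact ihx (y w) (ihy w hw)
  have hWne : W ≠ ⊥ := by
    intro h0
    apply hu0
    have hu : u ∈ W := by
      have : adjE b 1 u = u := by rw [adjE_one]; rfl
      rw [← this]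
      exact hgenW 1 (one_mem M)
    rw [h0] at hu
    simpa using hu
  have hWtop : W = ⊤ := (hirr W hWinv).resolve_left hWne
  -- range p is a proper subspace
  have hrangep_ne : LinearMap.range p ≠ ⊤ := by
    intro h0
    rw [h0, finrank_top, hpProj.2] at hrnp
    omega
  -- find m with (adjE m) u ∉ range p
  obtain ⟨m, hmM, hv⟩ : ∃ m ∈ M, adjE b m u ∉ LinearMap.range p := by
    by_contra hcon
    push_neg at hcon
    have hle : W ≤ LinearMap.range p :=
      Submodule.span_le.mpr (by rintro _ ⟨m, hm, rfl⟩; exact hcon m hm)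
    rw [hWtop] at hle
    exact hrangep_ne (top_le_iff.mp hle)
  set s : Module.End F V := q * m * p with hs
  have hsM : s ∈ M := mul_mem (mul_mem hqM hmM) hpM
  -- the adjugate of s is nonzero
  have hadjs : adjE b s ≠ 0 := by
    have h1 : adjE b s = adjE b p * (adjE b m * adjE b q) := by
      rw [hs, adjE_mul, adjE_mul]
    rw [adjE_proj b hpProj.1 hpProj.2, adjE_proj b hqProj.1 hqProj.2] at h1
    intro h0
    have heval : adjE b s u = adjE b m u - p (adjE b m u) := by
      rw [h1]
      simp only [Module.End.mul_apply, LinearMap.sub_apply, Module.End.one_apply, hqu, sub_zero]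
    rw [h0] at heval
    simp only [LinearMap.zero_apply] at heval
    apply hv
    have : p (adjE b m u) = adjE b m u := by
      have := heval.symm
      rwa [sub_eq_zero, eq_comm] at this
    exact ⟨adjE b m u, this⟩
  -- hence s has rank n - 1
  have hranks : ¬ (Module.finrank F (LinearMap.range s) + 2 ≤ Module.finrank F V) := by
    intro hcon
    exact hadjs (adjE_eq_zero b s hcon)
  have hrns := LinearMap.finrank_range_add_finrank_ker s
  have hKle : K ≤ LinearMap.ker s := by
    intro x hx
    have hx0 : p x = 0 := LinearMap.mem_ker.mp (hpker ▸ hx)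
    rw [LinearMap.mem_ker, hs]
    simp only [Module.End.mul_apply]
    rw [hx0, map_zero, map_zero]
  have hkers : LinearMap.ker s = K := by
    have h1 : Module.finrank F (LinearMap.ker s) ≤ Module.finrank F K := by
      have := Submodule.finrank_mono hKle
      rw [hKdim]
      omega
    exact (Submodule.eq_of_le_of_finrank_le hKle h1).symm
  have hrles : LinearMap.range s ≤ L := by
    rw [← hqrange]
    rintro x ⟨y, rfl⟩
    exact ⟨m (p y), rfl⟩
  have hranges : LinearMap.range s = L := by
    apply Submodule.eq_of_le_of_finrank_le hrles
    omega
  -- K and L intersect trivially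
  have hKL0 : ∀ x, x ∈ K → x ∈ L → x = 0 := by
    intro x hxK hxL
    by_contra hx0
    apply hKL
    have hspan : Submodule.span F {x} = K := by
      apply Submodule.eq_of_le_of_finrank_le
      · rw [Submodule.span_le, Set.singleton_subset_iff]; exact hxK
      · rw [finrank_span_singleton hx0, hKdim]
    rw [← hspan]
    rw [Submodule.span_le, Set.singleton_subset_iff]
    exact hxL
  -- s maps L onto L
  have hmapL : Submodule.map s L = L := by
    have hle : Submodule.map s L ≤ L := by
      conv_lhs => rw [← hranges]
      rintro x ⟨y, _, rfl⟩
      rw [← hranges]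
      exact ⟨y, rfl⟩
    apply Submodule.eq_of_le_of_finrank_le hle
    have hinj : Function.Injective (s.domRestrict L) := by
      rw [← LinearMap.ker_eq_bot, Submodule.eq_bot_iff]
      rintro ⟨x, hxL⟩ hx
      have hx' : s x = 0 := by
        have := LinearMap.mem_ker.mp hx
        simpa [LinearMap.domRestrict_apply] using this
      have hxK : x ∈ K := by rw [← hkers]; exact LinearMap.mem_ker.mpr hx'
      exact Subtype.ext (hKL0 x hxK hxL)
    have h2 := LinearMap.finrank_range_of_inj hinj
    rw [LinearMap.range_domRestrict] at h2
    rw [h2]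
  -- powers of s
  have hrangepow : ∀ k : ℕ, LinearMap.range (s ^ (k+1)) = L := by
    intro k
    induction k with
    | zero => rw [pow_one]; exact hranges
    | succ k ih =>
      have hstep : s ^ (k+1+1) = s * s ^ (k+1) := by
        rw [← pow_succ']
      rw [hstep, Module.End.mul_eq_comp, LinearMap.range_comp, ih, hmapL]
  have hkerpow : ∀ k : ℕ, LinearMap.ker (s ^ (k+1)) = K := by
    intro k
    have hle : K ≤ LinearMap.ker (s ^ (k+1)) := by
      intro x hx
      have hx0 : s x = 0 := by rw [← hkers] at hx; exact hx
      rw [LinearMap.mem_ker, pow_succ, Module.End.mul_apply, hx0, map_zero]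
    have hrn := LinearMap.finrank_range_add_finrank_ker (s ^ (k+1))
    rw [hrangepow k] at hrn
    refine (Submodule.eq_of_le_of_finrank_le hle ?_).symm
    rw [hKdim]
    omega
  -- an idempotent power of s
  obtain ⟨N, hN1, hNidem⟩ := exists_pow_idem s hfin (fun n => Submonoid.pow_mem M hsM n)
  obtain ⟨N', rfl⟩ : ∃ N', N = N' + 1 := ⟨N - 1, by omega⟩
  refine ⟨s ^ (N' + 1), Submonoid.pow_mem M hsM _, ?_, hkerpow N', hrangepow N'⟩
  rw [← pow_add]
  have h6 : (N' + 1) + (N' + 1) = 2 * (N' + 1) := by ring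
  rw [h6, hNidem]
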